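/- The real unit interval [0,1] as a bounded distributive lattice has a meet-complete representation and a join-complete representation, but no complete representation. -/
import Mathlib


section Defs
variable {L : Type} [Lattice L] [BoundedOrder L] {X : Type}

/-- A representation: a bounded lattice embedding into a powerset. -/
def IsRep (h : L → Set X) : Prop :=
  Function.Injective h ∧ (∀ a b : L, h (a ⊓ b) = h a ∩ h b) ∧
    (∀ a b : L, h (a ⊔ b) = h a ∪ h b) ∧ h ⊥ = ∅ ∧ h ⊤ = Set.univ

/-- Meet-complete: existing infima are sent to intersections. -/
def MeetComplete (h : L → Set X) : Prop :=
  ∀ (S : Set L) (x : L), IsGLB S x → h x = ⋂ a ∈ S, h a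

/-- Join-complete: existing suprema are sent to unions. -/
def JoinComplete (h : L → Set X) : Prop :=
  ∀ (S : Set L) (x : L), IsLUB S x → h x = ⋃ a ∈ S, h a

def IsFilter' (F : Set L) : Prop :=
  ⊤ ∈ F ∧ (∀ a b : L, a ∈ F → a ≤ b → b ∈ F) ∧ (∀ a b : L, a ∈ F → b ∈ F → a ⊓ b ∈ F)

def IsPrimeFilter (F : Set L) : Prop :=
  IsFilter' F ∧ ⊥ ∉ F ∧ ∀ a b : L, a ⊔ b ∈ F → a ∈ F ∨ b ∈ F

/-- Complete filter: contains all existing infima of its subsets. -/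
def CompleteFilter (F : Set L) : Prop :=
  ∀ S ⊆ F, ∀ x : L, IsGLB S x → x ∈ F

/-- Completely prime filter: if an existing supremum lies in F then some element does. -/
def CompletelyPrimeFilter (F : Set L) : Prop :=
  ∀ (S : Set L) (x : L), IsLUB S x → x ∈ F → ∃ s ∈ S, s ∈ F

/-- Complete ideal: contains all existing suprema of its subsets. -/
def CompleteIdeal (I : Set L) : Prop :=
  ∀ S ⊆ I, ∀ x : L, IsLUB S x → x ∈ I

/-- Completely prime ideal: if an existing infimum lies in I then some element does. -/
def CompletelyPrimeIdeal (I : Set L) : Prop :=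
  ∀ (S : Set L) (x : L), IsGLB S x → x ∈ I → ∃ s ∈ S, s ∈ I

/-- A distinguishing family of subsets of L. -/
def Distinguishing (K : Set (Set L)) : Prop :=
  ∀ a b : L, a ≠ b → ∃ s ∈ K, (a ∈ s ∧ b ∉ s) ∨ (b ∈ s ∧ a ∉ s)

/-- Ultrafilter: a maximal proper filter. -/
def IsUltrafilter (F : Set L) : Prop :=
  IsFilter' F ∧ ⊥ ∉ F ∧ ∀ G : Set L, IsFilter' G → ⊥ ∉ G → F ⊆ G → F = G

end Defs

theorem stmt13 :
    (∃ (X : Type) (h : unitInterval → Set X), IsRep h ∧ MeetComplete h) ∧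
    (∃ (X : Type) (h : unitInterval → Set X), IsRep h ∧ JoinComplete h) ∧
    ¬ ∃ (X : Type) (h : unitInterval → Set X), IsRep h ∧ MeetComplete h ∧ JoinComplete h := by
  refine ⟨?_, ?_, ?_⟩
  · -- Meet-complete representation: X = (0,1], h a = {x | x ≤ a}
    refine ⟨{x : unitInterval // ⊥ < x}, fun a => {x | x.1 ≤ a}, ⟨?_, ?_, ?_, ?_, ?_⟩, ?_⟩
    · intro a b hab
      by_contra hne
      rcases lt_or_gt_of_ne hne with hlt | hlt
      · exact absurd ((Set.ext_iff.1 hab ⟨b, lt_of_le_of_lt bot_le hlt⟩).2 (le_refl b))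
          (not_le.2 hlt)
      · exact absurd ((Set.ext_iff.1 hab ⟨a, lt_of_le_of_lt bot_le hlt⟩).1 (le_refl a))
          (not_le.2 hlt)
    · intro a b; ext x; simp [le_inf_iff]
    · intro a b; ext x; simp [le_sup_iff]
    · ext x; simpa using not_le.2 x.2
    · ext x; simp
    · intro S x hx
      ext y
      simp only [Set.mem_setOf_eq, Set.mem_iInter]
      constructor
      · intro hy a ha; exact hy.trans (hx.1 ha)
      · intro hy; exact hx.2 fun a ha => hy a ha
  · -- Join-complete representation: X = [0,1), h a = {x | x < a}
    refine ⟨{x : unitInterval // x < ⊤}, fun a => {x | x.1 < a}, ⟨?_, ?_, ?_, ?_, ?_⟩, ?_⟩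
    · intro a b hab
      by_contra hne
      rcases lt_or_gt_of_ne hne with hlt | hlt
      · exact absurd ((Set.ext_iff.1 hab ⟨a, lt_of_lt_of_le hlt le_top⟩).2 hlt) (lt_irrefl a)
      · exact absurd ((Set.ext_iff.1 hab ⟨b, lt_of_lt_of_le hlt le_top⟩).1 hlt) (lt_irrefl b)
    · intro a b; ext x; simp [lt_inf_iff]
    · intro a b; ext x; simp [lt_sup_iff]
    · ext x; simp
    · ext x; simpa using x.2
    · intro S x hx
      ext y
      simp only [Set.mem_setOf_eq, Set.mem_iUnion]
      constructor
      · intro hy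
        by_contra hc
        push_neg at hc
        exact absurd (hx.2 fun a ha => hc a ha) (not_le.2 hy)
      · rintro ⟨a, ha, hya⟩; exact lt_of_lt_of_le hya (hx.1 ha)
  · -- No complete representation
    rintro ⟨X, h, ⟨hinj, hmeet, hjoin, hbot, htop⟩, hMC, hJC⟩
    -- X is nonempty
    have hXne : Nonempty X := by
      by_contra hX
      have hIE : IsEmpty X := not_nonempty_iff.1 hX
      have : h ⊥ = h ⊤ := by
        rw [hbot, htop, Set.univ_eq_empty_iff.2 hIE]
      have hbt : (⊥ : unitInterval) = ⊤ := hinj this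
      exact absurd hbt (by simp [Subtype.ext_iff])
    obtain ⟨x⟩ := hXne
    -- the filter of x
    set F : Set unitInterval := {a | x ∈ h a} with hF
    have hTopF : (⊤ : unitInterval) ∈ F := by simp [hF, htop]
    -- infimum of F
    have hFim_ne : (Subtype.val '' F).Nonempty := ⟨1, ⟨⊤, hTopF, rfl⟩⟩
    have hFim_bdd : BddBelow (Subtype.val '' F) := ⟨0, by rintro r ⟨a, _, rfl⟩; exact a.2.1⟩
    set m₀ : ℝ := sInf (Subtype.val '' F) with hm₀
    have hm₀_mem : m₀ ∈ Set.Icc (0:ℝ) 1 := by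
      constructor
      · exact le_csInf hFim_ne (by rintro r ⟨a, _, rfl⟩; exact a.2.1)
      · exact le_trans (csInf_le hFim_bdd ⟨⊤, hTopF, rfl⟩) (⊤:unitInterval).2.2
    set m : unitInterval := ⟨m₀, hm₀_mem⟩ with hm
    have hmlb : ∀ a ∈ F, m ≤ a := by
      intro a ha
      exact Subtype.coe_le_coe.1 (csInf_le hFim_bdd ⟨a, ha, rfl⟩)
    have hglb : IsGLB F m := by
      constructor
      · intro a ha; exact hmlb a ha
      · intro b hb
        exact Subtype.coe_le_coe.1 (le_csInf hFim_ne (by rintro r ⟨a, ha, rfl⟩; exact hb ha))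
    -- m ∈ F since h is meet-complete
    have hmF : m ∈ F := by
      have := hMC F m hglb
      simp only [hF, Set.mem_setOf_eq] at *
      rw [this]
      simp only [Set.mem_iInter]
      intro a ha; exact ha
    -- m ≠ ⊥
    have hmbot : (⊥ : unitInterval) < m := by
      rcases eq_or_lt_of_le (bot_le : (⊥ : unitInterval) ≤ m) with heq | hlt
      · exfalso
        have : x ∈ h ⊥ := by rw [heq]; exact hmF
        rw [hbot] at this
        exact this
      · exact hlt
    -- m is the LUB of Iio m
    have hlub : IsLUB (Set.Iio m) m := by
      constructor
      · intro a ha; exact le_of_lt ha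
      · intro u hu
        by_contra hc
        push_neg at hc
        obtain ⟨v, hv1, hv2⟩ := exists_between hc
        exact absurd (hu (Set.mem_Iio.2 hv2)) (not_le.2 hv1)
    -- join-completeness gives an element of F below m
    have := hJC (Set.Iio m) m hlub
    have hxh : x ∈ h m := hmF
    rw [this] at hxh
    simp only [Set.mem_iUnion] at hxh
    obtain ⟨a, ham, hxa⟩ := hxh
    exact absurd (hmlb a hxa) (not_le.2 ham)
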